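/- The symplectic eigenvalues of a Williamson normal form are unique up to permutation: if A is a real symmetric positive definite 2N×2N matrix and S₁, S₂ ∈ Sp(2N,ℝ) and positive reals a₁,…,a_N and b₁,…,b_N satisfy S₁ A S₁ᵀ = diag(a₁,a₁,…,a_N,a_N) and S₂ A S₂ᵀ = diag(b₁,b₁,…,b_N,b_N), then there is a permutation π of {1,…,N} with b_i = a_{π(i)} for all i. -/
import Mathlib


open Matrix Polynomial
open ComplexOrder

noncomputable section

/-- The standard symplectic form matrix: block diagonal with 2×2 blocks [[0,1],[-1,0]]. -/
def symplForm (n : ℕ) : Matrix (Fin n) (Fin n) ℝ :=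
  Matrix.of fun i j =>
    if (i : ℕ) + 1 = (j : ℕ) ∧ (i : ℕ) % 2 = 0 then 1
    else if (j : ℕ) + 1 = (i : ℕ) ∧ (j : ℕ) % 2 = 0 then -1 else 0

/-- Membership in the real symplectic group: `S σ Sᵀ = σ`. -/
def IsSymplectic {n : ℕ} (S : Matrix (Fin n) (Fin n) ℝ) : Prop :=
  S * symplForm n * Sᵀ = symplForm n

/-- The Williamson diagonal matrix `diag(a₁,a₁,…,a_N,a_N)`. -/
def WDiag {N : ℕ} (a : Fin N → ℝ) : Matrix (Fin (2 * N)) (Fin (2 * N)) ℝ :=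
  Matrix.diagonal fun i => a ⟨(i : ℕ) / 2, by have := i.isLt; omega⟩

/-- A covariance matrix: real symmetric with `γ + iσ` positive semidefinite. -/
def IsCovMatrix {n : ℕ} (γ : Matrix (Fin n) (Fin n) ℝ) : Prop :=
  γ.IsSymm ∧
    (γ.map (Complex.ofReal) + Complex.I • (symplForm n).map Complex.ofReal).PosSemidef

/-- The block-diagonal direct sum of two square matrices. -/
def dirSum {m n : ℕ} (A : Matrix (Fin m) (Fin m) ℝ) (B : Matrix (Fin n) (Fin n) ℝ) :
    Matrix (Fin (m + n)) (Fin (m + n)) ℝ :=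
  Matrix.reindex finSumFinEquiv finSumFinEquiv (Matrix.fromBlocks A 0 0 B)

/-- Separability of a covariance matrix with respect to the split `A|B`. -/
def IsSepCov (nA nB : ℕ) (γ : Matrix (Fin (nA + nB)) (Fin (nA + nB)) ℝ) : Prop :=
  ∃ (γA : Matrix (Fin nA) (Fin nA) ℝ) (γB : Matrix (Fin nB) (Fin nB) ℝ),
    IsCovMatrix γA ∧ IsCovMatrix γB ∧ (γ - dirSum γA γB).PosSemidef

/-- The pairing equivalence `Fin 2 × Fin N ≃ Fin (2 * N)`, `(r, q) ↦ r + 2 * q`. -/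
def eN (N : ℕ) : Fin 2 × Fin N ≃ Fin (2 * N) :=
  (Equiv.prodComm (Fin 2) (Fin N)).trans (finProdFinEquiv.trans (finCongr (Nat.mul_comm N 2)))

lemma eN_val {N : ℕ} (r : Fin 2) (q : Fin N) : ((eN N (r, q) : Fin (2 * N)) : ℕ) = r + 2 * q := by
  simp [eN]

lemma symplForm_eq (N : ℕ) :
    symplForm (2 * N) =
      Matrix.reindex (eN N) (eN N) (Matrix.blockDiagonal fun _ : Fin N => !![(0:ℝ),1;-1,0]) := by
  ext i j
  obtain ⟨⟨r, q⟩, rfl⟩ := (eN N).surjective i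
  obtain ⟨⟨r', q'⟩, rfl⟩ := (eN N).surjective j
  simp only [Matrix.reindex_apply, Matrix.submatrix_apply, Equiv.symm_apply_apply,
    Matrix.blockDiagonal_apply, symplForm, Matrix.of_apply, eN_val]
  fin_cases r <;> fin_cases r' <;>
    simp only [Fin.ext_iff, Fin.isValue, Fin.val_zero, Fin.val_one] <;>
    norm_num <;> split_ifs <;> first | rfl | omega

lemma det_symplForm (N : ℕ) : (symplForm (2 * N)).det = 1 := by
  rw [symplForm_eq, Matrix.det_reindex_self, Matrix.det_blockDiagonal]
  simp [Matrix.det_fin_two_of]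

lemma poly_eq (N : ℕ) (a : Fin N → ℝ) :
    (WDiag a).map C + (X : ℝ[X]) • (symplForm (2 * N)).map C =
      Matrix.reindex (eN N) (eN N)
        (Matrix.blockDiagonal fun q : Fin N => !![C (a q), X; -X, C (a q)]) := by
  refine Matrix.ext fun i j => ?_
  obtain ⟨⟨r, q⟩, rfl⟩ := (eN N).surjective i
  obtain ⟨⟨r', q'⟩, rfl⟩ := (eN N).surjective j
  simp only [Matrix.reindex_apply, Matrix.submatrix_apply, Equiv.symm_apply_apply,
    Matrix.blockDiagonal_apply, Matrix.add_apply, Matrix.smul_apply, Matrix.map_apply,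
    WDiag, symplForm, Matrix.diagonal_apply, Matrix.of_apply, Fin.ext_iff, eN_val, smul_eq_mul]
  fin_cases r <;> fin_cases r' <;>
    simp only [Fin.isValue, Fin.val_zero, Fin.val_one] <;>
    norm_num <;> split_ifs <;>
    first
      | rfl
      | omega
      | (simp <;> (congr 1; apply Fin.ext; simp; omega))
      | ring

lemma det_poly (N : ℕ) (a : Fin N → ℝ) :
    ((WDiag a).map C + (X : ℝ[X]) • (symplForm (2 * N)).map C).det =
      ∏ i, ((X : ℝ[X]) ^ 2 + C (a i) ^ 2) := by
  rw [poly_eq, Matrix.det_reindex_self, Matrix.det_blockDiagonal]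
  refine Finset.prod_congr rfl fun i _ => ?_
  rw [Matrix.det_fin_two_of]; ring

lemma factor_prod (N : ℕ) (c : Fin N → ℝ) :
    ((Finset.univ.val.map (fun i : Fin N => (c i : ℂ) * Complex.I)
        + Finset.univ.val.map (fun i : Fin N => -((c i : ℂ) * Complex.I))).map
      fun z => (X : ℂ[X]) - C z).prod
    = ∏ i : Fin N, ((X : ℂ[X]) ^ 2 + C ((c i : ℂ)) ^ 2) := by
  rw [Multiset.map_add, Multiset.prod_add, Multiset.map_map, Multiset.map_map,
    ← Finset.prod_eq_multiset_prod, ← Finset.prod_eq_multiset_prod, ← Finset.prod_mul_distrib]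
  refine Finset.prod_congr rfl fun i _ => ?_
  have e1 : ((c i : ℂ) * Complex.I) ^ 2 = -(((c i : ℂ)) ^ 2) := by
    rw [mul_pow, Complex.I_sq]; ring
  calc ((X : ℂ[X]) - C ((c i : ℂ) * Complex.I)) * (X - C (-((c i : ℂ) * Complex.I)))
      = X ^ 2 - C (((c i : ℂ) * Complex.I) ^ 2) := by rw [map_neg, map_pow]; ring
    _ = X ^ 2 + C ((c i : ℂ)) ^ 2 := by rw [e1, map_neg, map_pow]; ring

lemma det_invariant (N : ℕ) (A S : Matrix (Fin (2 * N)) (Fin (2 * N)) ℝ) (c : Fin N → ℝ)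
    (hS : IsSymplectic S) (h : S * A * Sᵀ = WDiag c) :
    ((WDiag c).map C + (X : ℝ[X]) • (symplForm (2 * N)).map C).det =
      (A.map C + (X : ℝ[X]) • (symplForm (2 * N)).map C).det := by
  have hd : S.det * S.det = 1 := by
    have h0 := congrArg Matrix.det hS
    rw [Matrix.det_mul, Matrix.det_mul, Matrix.det_transpose, det_symplForm] at h0
    linarith [h0]
  have hm : (WDiag c).map C + (X : ℝ[X]) • (symplForm (2 * N)).map C =
      S.map C * (A.map C + (X : ℝ[X]) • (symplForm (2 * N)).map C) * (Sᵀ.map C) := by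
    rw [Matrix.mul_add, Matrix.add_mul]
    congr 1
    · rw [← Matrix.map_mul, ← Matrix.map_mul, h]
    · rw [Matrix.mul_smul, Matrix.smul_mul, ← Matrix.map_mul, ← Matrix.map_mul, hS]
  rw [hm, Matrix.det_mul, Matrix.det_mul]
  have h1 : (S.map C).det = C S.det := by
    rw [RingHom.map_det]; rfl
  have h2 : (Sᵀ.map C).det = C S.det := by
    rw [Matrix.transpose_map, Matrix.det_transpose, h1]
  rw [h1, h2]
  calc C S.det * (A.map C + (X : ℝ[X]) • (symplForm (2 * N)).map C).det * C S.det
      = C (S.det * S.det) * (A.map C + (X : ℝ[X]) • (symplForm (2 * N)).map C).det := by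
        rw [_root_.map_mul]; exact mul_right_comm _ _ _
    _ = _ := by rw [hd, Polynomial.C_1, one_mul]

/-- Uniqueness of symplectic eigenvalues up to permutation. -/
theorem williamson_eigenvalues_unique (N : ℕ) (hN : 1 ≤ N)
    (A : Matrix (Fin (2 * N)) (Fin (2 * N)) ℝ) (hAsymm : A.IsSymm) (hApos : A.PosDef)
    (S₁ S₂ : Matrix (Fin (2 * N)) (Fin (2 * N)) ℝ) (a b : Fin N → ℝ)
    (hS₁ : IsSymplectic S₁) (hS₂ : IsSymplectic S₂)
    (ha : ∀ i, 0 < a i) (hb : ∀ i, 0 < b i)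
    (h₁ : S₁ * A * S₁ᵀ = WDiag a) (h₂ : S₂ * A * S₂ᵀ = WDiag b) :
    ∃ π : Equiv.Perm (Fin N), ∀ i, b i = a (π i) := by
  classical
  have hab : ∏ i, ((X : ℝ[X]) ^ 2 + C (a i) ^ 2) = ∏ i, ((X : ℝ[X]) ^ 2 + C (b i) ^ 2) := by
    rw [← det_poly, ← det_poly, det_invariant N A S₁ a hS₁ h₁, det_invariant N A S₂ b hS₂ h₂]
  have habC : ∏ i, ((X : ℂ[X]) ^ 2 + C ((a i : ℂ)) ^ 2)
      = ∏ i, ((X : ℂ[X]) ^ 2 + C ((b i : ℂ)) ^ 2) := by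
    have h0 := congrArg (Polynomial.map (algebraMap ℝ ℂ)) hab
    simpa [Polynomial.map_prod, Polynomial.map_add, Polynomial.map_pow, Polynomial.map_X,
      Polynomial.map_C] using h0
  have hM : (Finset.univ.val.map (fun i : Fin N => (a i : ℂ) * Complex.I)
        + Finset.univ.val.map (fun i : Fin N => -((a i : ℂ) * Complex.I)))
      = (Finset.univ.val.map (fun i : Fin N => (b i : ℂ) * Complex.I)
        + Finset.univ.val.map (fun i : Fin N => -((b i : ℂ) * Complex.I))) := by
    have hpr : ((Finset.univ.val.map (fun i : Fin N => (a i : ℂ) * Complex.I)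
        + Finset.univ.val.map (fun i : Fin N => -((a i : ℂ) * Complex.I))).map
          fun z => (X : ℂ[X]) - C z).prod
        = ((Finset.univ.val.map (fun i : Fin N => (b i : ℂ) * Complex.I)
        + Finset.univ.val.map (fun i : Fin N => -((b i : ℂ) * Complex.I))).map
          fun z => (X : ℂ[X]) - C z).prod := by
      rw [factor_prod, factor_prod]; exact habC
    have h0 := congrArg Polynomial.roots hpr
    rwa [Polynomial.roots_multiset_prod_X_sub_C, Polynomial.roots_multiset_prod_X_sub_C] at h0
  have hmap : Finset.univ.val.map a = Finset.univ.val.map b := by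
    have him := congrArg (Multiset.map Complex.im) hM
    simp only [Multiset.map_add, Multiset.map_map, Function.comp] at him
    have hsimp : ∀ c : Fin N → ℝ, ∀ i, ((c i : ℂ) * Complex.I).im = c i := by
      intro c i; simp [Complex.mul_I_im]
    simp only [Complex.neg_im, hsimp] at him
    have hf := congrArg (Multiset.filter (fun x : ℝ => 0 < x)) him
    rw [Multiset.filter_add, Multiset.filter_add,
      Multiset.filter_eq_self.2
        (by intro x hx; obtain ⟨i, _, rfl⟩ := Multiset.mem_map.1 hx; exact ha i),
      Multiset.filter_eq_nil.2
        (by intro x hx; obtain ⟨i, _, rfl⟩ := Multiset.mem_map.1 hx; simpa using (ha i).le),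
      Multiset.filter_eq_self.2
        (by intro x hx; obtain ⟨i, _, rfl⟩ := Multiset.mem_map.1 hx; exact hb i),
      Multiset.filter_eq_nil.2
        (by intro x hx; obtain ⟨i, _, rfl⟩ := Multiset.mem_map.1 hx; simpa using (hb i).le)] at hf
    simpa using hf
  have hfib : ∀ c : ℝ, Fintype.card {i // b i = c} = Fintype.card {i // a i = c} := by
    intro c
    have h1 := congrArg (Multiset.count c) hmap
    rw [Multiset.count_map, Multiset.count_map] at h1
    rw [Fintype.card_subtype, Fintype.card_subtype, Finset.card_def, Finset.card_def,
      Finset.filter_val, Finset.filter_val]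
    simp only [eq_comm] at h1 ⊢
    exact h1
  exact ⟨Equiv.ofFiberEquiv (f := b) (g := a) fun c => Fintype.equivOfCardEq (hfib c),
    fun i => (Equiv.ofFiberEquiv_map _ i).symm⟩
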